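/- Let (μ,α,β,λ₀) and (μ',α',β',λ₀') be admissible parameters (μ,μ',β,β',λ₀,λ₀' > 0 and α,α' ∈ (0,1)). If the spectral densities f_{(μ,α,β,λ₀)} and f_{(μ',α',β',λ₀')} are equal as functions on ℝ, then: μ/(1-α) + λ₀ = μ'/(1-α') + λ₀', μα(2-α)/(1-α)³ = μ'α'(2-α')/(1-α')³, and β(1-α) = β'(1-α'). Conversely, these three equations imply equality of the spectral densities. -/

import Mathlib

open Real

theorem spectral_density_equality_iff_system
    (μ μ' β β' l₀ l₀' α α' : ℝ)
    (hμ : 0 < μ) (hμ' : 0 < μ')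
    (hα : α ∈ Set.Ioo (0:ℝ) 1) (hα' : α' ∈ Set.Ioo (0:ℝ) 1)
    (hβ : 0 < β) (hβ' : 0 < β') (hl : 0 < l₀) (hl' : 0 < l₀') :
    (∀ ν : ℝ,
        (μ / (1 - α)) * (β ^ 2 * α * (2 - α) / (β ^ 2 * (1 - α) ^ 2 + 4 * π ^ 2 * ν ^ 2))
            + μ / (1 - α) + l₀
          = (μ' / (1 - α')) *
              (β' ^ 2 * α' * (2 - α') / (β' ^ 2 * (1 - α') ^ 2 + 4 * π ^ 2 * ν ^ 2))
            + μ' / (1 - α') + l₀')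
      ↔ (μ / (1 - α) + l₀ = μ' / (1 - α') + l₀' ∧
          μ * α * (2 - α) / (1 - α) ^ 3 = μ' * α' * (2 - α') / (1 - α') ^ 3 ∧
          β * (1 - α) = β' * (1 - α')) := by
  have hπ : (0:ℝ) < π := Real.pi_pos
  have h1α : (0:ℝ) < 1 - α := by linarith [hα.2]
  have h1α' : (0:ℝ) < 1 - α' := by linarith [hα'.2]
  have hα0 := hα.1; have hα'0 := hα'.1
  have hc : ((1-α)*(1-α')) ≠ 0 := by positivity
  constructor
  · intro H
    have key : ∀ x : ℝ, 0 ≤ x →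
        μ*(β^2*α*(2-α))*(1-α)*(1-α')^2*(β'^2*(1-α')^2+x)
          + (μ*(1-α)*(1-α')^2 + l₀*(1-α)^2*(1-α')^2)*((β^2*(1-α)^2+x)*(β'^2*(1-α')^2+x))
        = μ'*(β'^2*α'*(2-α'))*(1-α')*(1-α)^2*(β^2*(1-α)^2+x)
          + (μ'*(1-α')*(1-α)^2 + l₀'*(1-α)^2*(1-α')^2)*((β^2*(1-α)^2+x)*(β'^2*(1-α')^2+x)) := by
      intro x hx
      have hν : 4 * π ^ 2 * (Real.sqrt x / (2*π)) ^ 2 = x := by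
        rw [div_pow, Real.sq_sqrt hx]
        field_simp; ring
      have H' := H (Real.sqrt x / (2*π))
      rw [hν] at H'
      have hd : β ^ 2 * (1 - α) ^ 2 + x > 0 := by positivity
      have hd' : β' ^ 2 * (1 - α') ^ 2 + x > 0 := by positivity
      field_simp at H'
      linear_combination ((1-α)*(1-α'))*H'
    have L0 := key 0 le_rfl
    have L1 := key 1 zero_le_one
    have L4 := key 4 (by norm_num)
    have hK : ((1-α)*(1-α'))*(μ*(1-α') + l₀*(1-α)*(1-α'))
        = ((1-α)*(1-α'))*(μ'*(1-α) + l₀'*(1-α)*(1-α')) := by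
      linear_combination (1/12)*L4 - (1/3)*L1 + (1/4)*L0
    have hK' := mul_left_cancel₀ hc hK
    have hU : ((1-α)*(1-α'))*(μ*(β^2*α*(2-α))*(1-α'))
        = ((1-α)*(1-α'))*(μ'*(β'^2*α'*(2-α'))*(1-α)) := by
      linear_combination (-1/12)*L4 + (4/3)*L1 - (5/4)*L0
        - (β^2*(1-α)^2 + β'^2*(1-α')^2)*hK
    have hU' := mul_left_cancel₀ hc hU
    have hUpos : 0 < μ*(β^2*α*(2-α))*(1-α')*((1-α)*(1-α')) := by
      have h2 : (0:ℝ) < 2 - α := by linarith [hα.2]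
      positivity
    have h0 : (μ*(β^2*α*(2-α))*(1-α')*((1-α)*(1-α'))) * (β'^2*(1-α')^2 - β^2*(1-α)^2) = 0 := by
      linear_combination L0 - (β^2*(1-α)^2*(β'^2*(1-α')^2)*((1-α)*(1-α')))*hK'
        - ((1-α)*(1-α')*(β^2*(1-α)^2))*hU'
    have hQQ : β^2*(1-α)^2 = β'^2*(1-α')^2 := by
      have := (mul_eq_zero.mp h0).resolve_left (ne_of_gt hUpos)
      linarith
    have hQpos : (0:ℝ) < β^2*(1-α)^2 := by positivity
    refine ⟨?_, ?_, ?_⟩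
    · field_simp
      linear_combination hK'
    · have hG : (μ*α*(2-α)*(1-α')^3 - μ'*α'*(2-α')*(1-α)^3) * (β^2*(1-α)^2) = 0 := by
        linear_combination ((1-α)^2*(1-α')^2)*hU' - (μ'*α'*(2-α')*(1-α)^3)*hQQ
      have hD := (mul_eq_zero.mp hG).resolve_right (ne_of_gt hQpos)
      field_simp
      linear_combination hD
    · have hz : (β*(1-α) - β'*(1-α'))*(β*(1-α) + β'*(1-α')) = 0 := by linear_combination hQQ
      rcases mul_eq_zero.mp hz with h | h
      · linarith
      · linarith [mul_pos hβ h1α, mul_pos hβ' h1α']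
  · rintro ⟨h1, h2, h3⟩ ν
    have hQQ : β^2*(1-α)^2 = β'^2*(1-α')^2 := by linear_combination (β*(1-α)+β'*(1-α'))*h3
    have hd : (0:ℝ) < β ^ 2 * (1 - α) ^ 2 + 4 * π ^ 2 * ν ^ 2 := by positivity
    have hd' : (0:ℝ) < β' ^ 2 * (1 - α') ^ 2 + 4 * π ^ 2 * ν ^ 2 := by positivity
    have H1 : μ*(1-α') + l₀*(1-α)*(1-α') = μ'*(1-α) + l₀'*(1-α)*(1-α') := by
      field_simp at h1
      linear_combination h1
    have H2 : μ*α*(2-α)*(1-α')^3 = μ'*α'*(2-α')*(1-α)^3 := by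
      field_simp at h2
      linear_combination h2
    have hcpos : (0:ℝ) < (1-α)^2*(1-α')^2 := by positivity
    have hU0 : (μ*(β^2*α*(2-α))*(1-α') - μ'*(β'^2*α'*(2-α'))*(1-α)) * ((1-α)^2*(1-α')^2) = 0 := by
      linear_combination (β^2*(1-α)^2)*H2 + (μ'*α'*(2-α')*(1-α)^3)*hQQ
    have hU : μ*(β^2*α*(2-α))*(1-α') = μ'*(β'^2*α'*(2-α'))*(1-α) := by
      have := (mul_eq_zero.mp hU0).resolve_right (ne_of_gt hcpos)
      linarith
    field_simp
    linear_combination ((β'^2*(1-α')^2 + 4*π^2*ν^2))*hU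
      - ((μ'*(β'^2*α'*(2-α'))*(1-α)))*hQQ
      + ((β^2*(1-α)^2 + 4*π^2*ν^2)*(β'^2*(1-α')^2 + 4*π^2*ν^2))*H1
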